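/- Fix γ > 1 and p ∈ (0,1) with p < p₀(γ) = (γ−1)/(γ−1 + e^{γ/(γ−1)}). Then the function φ(x) = h_p(x^{1/γ}) on (0,1) has exactly two inflection points, both lying to the right of x = p^γ; φ is convex, then concave, then convex. -/

import Mathlib

open Real Set Filter

/-- The binomial rate function `h_p(x) = x log(x/p) + (1−x) log((1−x)/(1−p))`. -/
noncomputable def hbin (p x : ℝ) : ℝ :=
  x * Real.log (x / p) + (1 - x) * Real.log ((1 - x) / (1 - p))

/-- Auxiliary sign function: sign of second derivative of `x ↦ h_p (x^(1/γ))` at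
`x` is the sign of `gaux γ p (x^(1/γ))`. -/
noncomputable def gaux (γ p y : ℝ) : ℝ :=
  (1 - y)⁻¹ - (γ - 1) * (Real.log y - Real.log (1 - y) - Real.log p + Real.log (1 - p))

/-- First derivative of `x ↦ h_p (x^(1/γ))`. -/
noncomputable def Faux (γ p x : ℝ) : ℝ :=
  (γ⁻¹ * Real.log x - Real.log p - Real.log (1 - x ^ (1/γ)) + Real.log (1 - p)) *
    (γ⁻¹ * x ^ (1/γ - 1))

/-- Second derivative of `x ↦ h_p (x^(1/γ))`. -/
noncomputable def Gaux (γ p x : ℝ) : ℝ :=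
  x ^ (1/γ - 2) / γ ^ 2 * gaux γ p (x ^ (1/γ))

lemma hasDerivAt_hbin_comp (γ p : ℝ) (hγ : 1 < γ) (hp : p ∈ Set.Ioo (0:ℝ) 1)
    {x : ℝ} (hx : x ∈ Set.Ioo (0:ℝ) 1) :
    HasDerivAt (fun x => hbin p (x ^ (1/γ))) (Faux γ p x) x := by
  obtain ⟨hx0, hx1⟩ := hx
  have hγ0 : (0:ℝ) < γ := lt_trans one_pos hγ
  have he0 : (0:ℝ) < 1/γ := by positivity
  have hy0 : (0:ℝ) < x ^ (1/γ) := rpow_pos_of_pos hx0 _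
  have hy1 : x ^ (1/γ) < 1 := rpow_lt_one hx0.le hx1 he0
  have h1y : (0:ℝ) < 1 - x ^ (1/γ) := by linarith
  -- the rewritten function
  set f₂ : ℝ → ℝ := fun x => x ^ (1/γ) * (γ⁻¹ * Real.log x - Real.log p) +
      (1 - x ^ (1/γ)) * (Real.log (1 - x ^ (1/γ)) - Real.log (1 - p)) with hf₂
  have hev : (fun x => hbin p (x ^ (1/γ))) =ᶠ[nhds x] f₂ := by
    filter_upwards [Ioo_mem_nhds hx0 hx1] with z hz
    obtain ⟨hz0, hz1⟩ := hz
    have hzy0 : (0:ℝ) < z ^ (1/γ) := rpow_pos_of_pos hz0 _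
    have hzy1 : z ^ (1/γ) < 1 := rpow_lt_one hz0.le hz1 he0
    have h1zy : (0:ℝ) < 1 - z ^ (1/γ) := by linarith
    simp only [hbin, hf₂]
    rw [Real.log_div hzy0.ne' hp.1.ne', Real.log_div h1zy.ne' (by linarith [hp.2]),
      Real.log_rpow hz0]
    ring
  have hyd : HasDerivAt (fun x : ℝ => x ^ (1/γ)) (1/γ * x ^ (1/γ - 1)) x :=
    Real.hasDerivAt_rpow_const (Or.inl hx0.ne')
  have hlog : HasDerivAt Real.log x⁻¹ x := Real.hasDerivAt_log hx0.ne'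
  have hA : HasDerivAt (fun x : ℝ => x ^ (1/γ) * (γ⁻¹ * Real.log x - Real.log p))
      (1/γ * x ^ (1/γ - 1) * (γ⁻¹ * Real.log x - Real.log p) + x ^ (1/γ) * (γ⁻¹ * x⁻¹)) x :=
    hyd.mul ((hlog.const_mul γ⁻¹).sub_const _)
  have hinner : HasDerivAt (fun x : ℝ => 1 - x ^ (1/γ)) (-(1/γ * x ^ (1/γ - 1))) x :=
    hyd.const_sub 1
  have hlc : HasDerivAt (fun x : ℝ => Real.log (1 - x ^ (1/γ)))
      ((1 - x ^ (1/γ))⁻¹ * -(1/γ * x ^ (1/γ - 1))) x :=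
    by have := (Real.hasDerivAt_log h1y.ne').comp x hinner; exact this
  have hB : HasDerivAt
      (fun x : ℝ => (1 - x ^ (1/γ)) * (Real.log (1 - x ^ (1/γ)) - Real.log (1 - p)))
      (-(1/γ * x ^ (1/γ - 1)) * (Real.log (1 - x ^ (1/γ)) - Real.log (1 - p)) +
        (1 - x ^ (1/γ)) * ((1 - x ^ (1/γ))⁻¹ * -(1/γ * x ^ (1/γ - 1)))) x :=
    hinner.mul (hlc.sub_const _)
  have hsum := (hA.add hB).congr_of_eventuallyEq hev
  refine hsum.congr_deriv (Eq.symm ?_)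
  have hxx : x ^ (1/γ) * x⁻¹ = x ^ (1/γ - 1) := by
    rw [Real.rpow_sub_one hx0.ne']
    exact (div_eq_mul_inv _ _).symm
  have hcan : (1 - x ^ (1/γ)) * (1 - x ^ (1/γ))⁻¹ = 1 := mul_inv_cancel₀ h1y.ne'
  have h1 : x ^ (1/γ) * (γ⁻¹ * x⁻¹) = γ⁻¹ * x ^ (1/γ - 1) := by
    rw [← hxx]; ring
  have h2 : (1 - x ^ (1/γ)) * ((1 - x ^ (1/γ))⁻¹ * -(1/γ * x ^ (1/γ - 1))) =
      -(1/γ * x ^ (1/γ - 1)) := by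
    rw [← mul_assoc, hcan, one_mul]
  rw [h1, h2]
  simp only [Faux]
  ring

lemma hasDerivAt_Faux (γ p : ℝ) (hγ : 1 < γ) (hp : p ∈ Set.Ioo (0:ℝ) 1)
    {x : ℝ} (hx : x ∈ Set.Ioo (0:ℝ) 1) :
    HasDerivAt (Faux γ p) (Gaux γ p x) x := by
  obtain ⟨hx0, hx1⟩ := hx
  have hγ0 : (0:ℝ) < γ := lt_trans one_pos hγ
  have he0 : (0:ℝ) < 1/γ := by positivity
  have hy0 : (0:ℝ) < x ^ (1/γ) := rpow_pos_of_pos hx0 _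
  have hy1 : x ^ (1/γ) < 1 := rpow_lt_one hx0.le hx1 he0
  have h1y : (0:ℝ) < 1 - x ^ (1/γ) := by linarith
  have hyd : HasDerivAt (fun x : ℝ => x ^ (1/γ)) (1/γ * x ^ (1/γ - 1)) x :=
    Real.hasDerivAt_rpow_const (Or.inl hx0.ne')
  have hlog : HasDerivAt Real.log x⁻¹ x := Real.hasDerivAt_log hx0.ne'
  have hinner : HasDerivAt (fun x : ℝ => 1 - x ^ (1/γ)) (-(1/γ * x ^ (1/γ - 1))) x :=
    hyd.const_sub 1
  have hlc : HasDerivAt (fun x : ℝ => Real.log (1 - x ^ (1/γ)))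
      ((1 - x ^ (1/γ))⁻¹ * -(1/γ * x ^ (1/γ - 1))) x :=
    by have := (Real.hasDerivAt_log h1y.ne').comp x hinner; exact this
  have hu : HasDerivAt
      (fun x : ℝ => γ⁻¹ * Real.log x - Real.log p - Real.log (1 - x ^ (1/γ)) + Real.log (1 - p))
      (γ⁻¹ * x⁻¹ - (1 - x ^ (1/γ))⁻¹ * -(1/γ * x ^ (1/γ - 1))) x :=
    (((hlog.const_mul γ⁻¹).sub_const _).sub hlc).add_const _
  have hv : HasDerivAt (fun x : ℝ => γ⁻¹ * x ^ (1/γ - 1))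
      (γ⁻¹ * ((1/γ - 1) * x ^ (1/γ - 1 - 1))) x :=
    (Real.hasDerivAt_rpow_const (Or.inl hx0.ne')).const_mul γ⁻¹
  have hF := hu.mul hv
  refine hF.congr_deriv (Eq.symm ?_)
  -- algebraic identities
  have hexp : 1/γ - 1 - 1 = 1/γ - 2 := by ring
  have hid1 : x ^ (1/γ - 1) * x⁻¹ = x ^ (1/γ - 2) := by
    rw [← hexp, Real.rpow_sub_one hx0.ne' (1/γ - 1)]
    exact (div_eq_mul_inv _ _).symm
  have hid2 : x ^ (1/γ - 1) * x ^ (1/γ - 1) = x ^ (1/γ - 2) * x ^ (1/γ) := by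
    rw [← Real.rpow_add hx0, ← Real.rpow_add hx0]
    norm_num
    ring_nf
  have hlogy : Real.log (x ^ (1/γ)) = 1/γ * Real.log x := Real.log_rpow hx0 _
  have hcan : (1 - x ^ (1/γ))⁻¹ * (1 - x ^ (1/γ)) = 1 := inv_mul_cancel₀ h1y.ne'
  have hγinv : γ * γ⁻¹ = 1 := mul_inv_cancel₀ (by positivity : γ ≠ 0)
  simp only [Gaux, gaux, hlogy, hexp]
  linear_combination (-(γ⁻¹)^2) * hid1 + (-(γ⁻¹)^2 * (1 - x ^ (1/γ))⁻¹) * hid2 +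
    ((γ⁻¹)^2 * x ^ (1/γ - 2)) * hcan +
    (-(γ⁻¹ * (γ⁻¹ * Real.log x - Real.log p - Real.log (1 - x ^ (1/γ)) + Real.log (1 - p)) *
      x ^ (1/γ - 2))) * hγinv

lemma hasDerivAt_gaux (γ p : ℝ) {y : ℝ} (hy : y ∈ Set.Ioo (0:ℝ) 1) :
    HasDerivAt (gaux γ p) ((γ * y - (γ - 1)) / (y * (1 - y) ^ 2)) y := by
  obtain ⟨hy0, hy1⟩ := hy
  have h1y : (0:ℝ) < 1 - y := by linarith
  have hone : HasDerivAt (fun y : ℝ => 1 - y) (-1 : ℝ) y := by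
    simpa using (hasDerivAt_id y).const_sub 1
  have hinv : HasDerivAt (fun y : ℝ => (1 - y)⁻¹) (-((1 - y) ^ 2)⁻¹ * -1) y :=
    (hasDerivAt_inv h1y.ne').comp y hone
  have hl1 : HasDerivAt Real.log y⁻¹ y := Real.hasDerivAt_log hy0.ne'
  have hl2 : HasDerivAt (fun y : ℝ => Real.log (1 - y)) ((1 - y)⁻¹ * -1) y :=
    (Real.hasDerivAt_log h1y.ne').comp y hone
  have h := hinv.sub ((((hl1.sub hl2).sub_const (Real.log p)).add_const
    (Real.log (1 - p))).const_mul (γ - 1))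
  refine h.congr_deriv (Eq.symm ?_)
  field_simp
  ring

lemma gaux_continuousOn (γ p : ℝ) : ContinuousOn (gaux γ p) (Set.Ioo (0:ℝ) 1) := by
  intro y hy
  exact ((hasDerivAt_gaux γ p hy).continuousAt).continuousWithinAt

/-- For `γ > 1` and `p < p₀(γ)`, the function `φ(x) = h_p(x^{1/γ})` has exactly two
inflection points `x₁ < x₂`, both to the right of `p^γ`: its second derivative is
positive on `(0,x₁)`, negative on `(x₁,x₂)` and positive on `(x₂,1)`; so `φ` is
convex, then concave, then convex. -/
theorem hbin_rpow_two_inflection_points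
    (γ : ℝ) (hγ : 1 < γ)
    (p : ℝ) (hp : p ∈ Set.Ioo (0 : ℝ) 1)
    (hp0 : p < (γ - 1) / (γ - 1 + Real.exp (γ / (γ - 1)))) :
    ∃ x₁ x₂ : ℝ, p ^ γ < x₁ ∧ x₁ < x₂ ∧ x₂ < 1 ∧
      (∀ x ∈ Set.Ioo (0 : ℝ) x₁,
        0 < iteratedDeriv 2 (fun x => hbin p (x ^ (1 / γ))) x) ∧
      (∀ x ∈ Set.Ioo x₁ x₂,
        iteratedDeriv 2 (fun x => hbin p (x ^ (1 / γ))) x < 0) ∧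
      (∀ x ∈ Set.Ioo x₂ (1 : ℝ),
        0 < iteratedDeriv 2 (fun x => hbin p (x ^ (1 / γ))) x) ∧
      ConvexOn ℝ (Set.Ioo (0 : ℝ) x₁) (fun x => hbin p (x ^ (1 / γ))) ∧
      ConcaveOn ℝ (Set.Ioo x₁ x₂) (fun x => hbin p (x ^ (1 / γ))) ∧
      ConvexOn ℝ (Set.Ioo x₂ (1 : ℝ)) (fun x => hbin p (x ^ (1 / γ))) := by
  obtain ⟨hp0', hp1⟩ := hp
  have hγ0 : (0:ℝ) < γ := lt_trans one_pos hγ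
  have hγ1 : (0:ℝ) < γ - 1 := by linarith
  have hE : (0:ℝ) < Real.exp (γ / (γ - 1)) := Real.exp_pos _
  set c : ℝ := (γ - 1) / γ with hc
  have hc0 : 0 < c := by positivity
  have hc1 : c < 1 := by rw [hc, div_lt_one hγ0]; linarith
  -- p < c
  have hpc : p < c := by
    have h1E : (1:ℝ) < Real.exp (γ / (γ - 1)) := by
      rw [Real.one_lt_exp_iff]
      positivity
    calc p < (γ - 1) / (γ - 1 + Real.exp (γ / (γ - 1))) := hp0
    _ ≤ (γ - 1) / γ := by
        apply div_le_div_of_nonneg_left (le_of_lt hγ1) hγ0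
        linarith
  -- g p > 0
  have hgp : 0 < gaux γ p p := by
    simp only [gaux]
    have : Real.log p - Real.log (1 - p) - Real.log p + Real.log (1 - p) = 0 := by ring
    rw [this, mul_zero, sub_zero]
    have : (0:ℝ) < 1 - p := by linarith
    positivity
  -- g c < 0
  have hgc : gaux γ p c < 0 := by
    have h1p : (0:ℝ) < 1 - p := by linarith
    have h1c : 1 - c = 1/γ := by rw [hc]; field_simp; ring
    have hlogc : Real.log c - Real.log (1 - c) = Real.log (γ - 1) := by
      rw [h1c, hc, Real.log_div hγ1.ne' hγ0.ne', Real.log_div one_ne_zero hγ0.ne',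
        Real.log_one]
      ring
    have hkey : γ / (γ - 1) < Real.log (γ - 1) - Real.log p + Real.log (1 - p) := by
      have hpd : p * (γ - 1 + Real.exp (γ / (γ - 1))) < γ - 1 :=
        (lt_div_iff₀ (by linarith)).mp hp0
      have hE' : Real.exp (γ / (γ - 1)) < (γ - 1) * (1 - p) / p := by
        rw [lt_div_iff₀ hp0']
        nlinarith
      have hlt := Real.log_lt_log hE hE'
      rw [Real.log_exp] at hlt
      calc γ / (γ - 1) < Real.log ((γ - 1) * (1 - p) / p) := hlt
      _ = Real.log (γ - 1) - Real.log p + Real.log (1 - p) := by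
          rw [Real.log_div (mul_pos hγ1 h1p).ne' hp0'.ne',
            Real.log_mul hγ1.ne' (ne_of_gt h1p)]
          ring
    have h1 : ((1:ℝ)/γ)⁻¹ = γ := by field_simp
    have h2 : γ = (γ - 1) * (γ / (γ - 1)) := by field_simp
    simp only [gaux]
    rw [hlogc, h1c, h1]
    nlinarith [mul_lt_mul_of_pos_left hkey hγ1, h2]
  -- monotonicity of g
  have hanti : StrictAntiOn (gaux γ p) (Set.Ioc 0 c) := by
    apply strictAntiOn_of_deriv_neg (convex_Ioc 0 c)
    · exact (gaux_continuousOn γ p).mono (fun y hy => ⟨hy.1, lt_of_le_of_lt hy.2 hc1⟩)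
    · intro y hy
      rw [interior_Ioc] at hy
      have hy' : y ∈ Set.Ioo (0:ℝ) 1 := ⟨hy.1, lt_trans hy.2 hc1⟩
      rw [(hasDerivAt_gaux γ p hy').deriv]
      apply div_neg_of_neg_of_pos
      · have : y < c := hy.2
        rw [hc, lt_div_iff₀ hγ0] at this; nlinarith
      · have h1y : (0:ℝ) < 1 - y := by linarith [hy'.2]
        exact mul_pos hy'.1 (pow_pos h1y 2)
  have hmono : StrictMonoOn (gaux γ p) (Set.Ico c 1) := by
    apply strictMonoOn_of_deriv_pos (convex_Ico c 1)
    · exact (gaux_continuousOn γ p).mono (fun y hy => ⟨lt_of_lt_of_le hc0 hy.1, hy.2⟩)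
    · intro y hy
      rw [interior_Ico] at hy
      have hy' : y ∈ Set.Ioo (0:ℝ) 1 := ⟨lt_trans hc0 hy.1, hy.2⟩
      rw [(hasDerivAt_gaux γ p hy').deriv]
      apply div_pos
      · have : c < y := hy.1
        rw [hc, div_lt_iff₀ hγ0] at this; nlinarith
      · have h1y : (0:ℝ) < 1 - y := by linarith [hy'.2]
        exact mul_pos hy'.1 (pow_pos h1y 2)
  -- a point b in (c,1) with g b > 0
  obtain ⟨b, hbmem, hgb⟩ : ∃ b ∈ Set.Ioo c 1, 0 < gaux γ p b := by
    have htt : Tendsto (gaux γ p) (nhdsWithin 1 (Set.Iio 1)) atTop := by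
      have hsub : Tendsto (fun y : ℝ => 1 - y) (nhdsWithin 1 (Set.Iio 1))
          (nhdsWithin 0 (Set.Ioi 0)) := by
        apply tendsto_nhdsWithin_of_tendsto_nhds_of_eventually_within _
        · have hco : Continuous (fun y : ℝ => 1 - y) := by continuity
          have h10 : Tendsto (fun y : ℝ => 1 - y) (nhds 1) (nhds 0) := by
            have := hco.tendsto (1:ℝ)
            simpa using this
          exact h10.mono_left nhdsWithin_le_nhds
        · filter_upwards [self_mem_nhdsWithin] with y hy
          simpa using hy
      have hmain : Tendsto (fun t : ℝ => t⁻¹ + (γ - 1) * Real.log t)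
          (nhdsWithin 0 (Set.Ioi 0)) atTop := by
        have h1 : Tendsto (fun t : ℝ => t⁻¹ * (1 + (γ - 1) * (Real.log t * t)))
            (nhdsWithin 0 (Set.Ioi 0)) atTop := by
          apply Filter.Tendsto.atTop_mul_pos one_pos tendsto_inv_nhdsGT_zero
          have hlt : Tendsto (fun t : ℝ => Real.log t * t) (nhdsWithin 0 (Set.Ioi 0))
              (nhds 0) := by
            have := tendsto_log_mul_rpow_nhdsGT_zero (r := 1) one_pos
            simpa using this
          have : Tendsto (fun t : ℝ => 1 + (γ - 1) * (Real.log t * t))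
              (nhdsWithin 0 (Set.Ioi 0)) (nhds (1 + (γ - 1) * 0)) :=
            tendsto_const_nhds.add (tendsto_const_nhds.mul hlt)
          simpa using this
        apply h1.congr'
        filter_upwards [self_mem_nhdsWithin] with t ht
        have ht0 : (0:ℝ) < t := ht
        field_simp
      have hrest : Tendsto (fun y : ℝ => -(γ - 1) * Real.log y +
          (γ - 1) * Real.log p - (γ - 1) * Real.log (1 - p))
          (nhdsWithin 1 (Set.Iio 1))
          (nhds (-(γ - 1) * Real.log 1 + (γ - 1) * Real.log p - (γ - 1) * Real.log (1 - p))) := by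
        apply Filter.Tendsto.mono_left _ nhdsWithin_le_nhds
        exact (((Real.continuousAt_log one_ne_zero).tendsto.const_mul _).add_const _).sub_const _
      have := Filter.Tendsto.atTop_add (hmain.comp hsub) hrest
      apply this.congr
      intro y
      simp only [Function.comp, gaux]
      ring
    have hev : ∀ᶠ y in nhdsWithin 1 (Set.Iio 1), 0 < gaux γ p y :=
      htt.eventually_gt_atTop 0
    have hmem : Set.Ioo c 1 ∈ nhdsWithin 1 (Set.Iio 1) :=
      Ioo_mem_nhdsLT_of_mem ⟨hc1, le_refl 1⟩
    obtain ⟨b, hb1, hb2⟩ := (hev.and (eventually_of_mem hmem (fun y hy => hy))).exists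
    exact ⟨b, hb2, hb1⟩
  -- zeros of g
  obtain ⟨y₁, hy₁mem, hy₁⟩ : ∃ y₁ ∈ Set.Ioo p c, gaux γ p y₁ = 0 := by
    have hcont : ContinuousOn (gaux γ p) (Set.Icc p c) :=
      (gaux_continuousOn γ p).mono (fun y hy => ⟨lt_of_lt_of_le hp0' hy.1,
        lt_of_le_of_lt hy.2 hc1⟩)
    have := intermediate_value_Icc' (le_of_lt hpc) hcont
      (Set.mem_Icc.mpr ⟨le_of_lt hgc, le_of_lt hgp⟩)
    obtain ⟨y₁, hy₁m, hy₁⟩ := this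
    refine ⟨y₁, ⟨?_, ?_⟩, hy₁⟩
    · rcases eq_or_lt_of_le hy₁m.1 with h | h
      · exact absurd (h ▸ hy₁) (ne_of_gt hgp)
      · exact h
    · rcases eq_or_lt_of_le hy₁m.2 with h | h
      · exact absurd (h ▸ hy₁ : gaux γ p c = 0) (ne_of_lt hgc)
      · exact h
  obtain ⟨y₂, hy₂mem, hy₂⟩ : ∃ y₂ ∈ Set.Ioo c b, gaux γ p y₂ = 0 := by
    have hcont : ContinuousOn (gaux γ p) (Set.Icc c b) :=
      (gaux_continuousOn γ p).mono (fun y hy => ⟨lt_of_lt_of_le hc0 hy.1,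
        lt_of_le_of_lt hy.2 hbmem.2⟩)
    have := intermediate_value_Icc (le_of_lt hbmem.1) hcont
      (Set.mem_Icc.mpr ⟨le_of_lt hgc, le_of_lt hgb⟩)
    obtain ⟨y₂, hy₂m, hy₂⟩ := this
    refine ⟨y₂, ⟨?_, ?_⟩, hy₂⟩
    · rcases eq_or_lt_of_le hy₂m.1 with h | h
      · exact absurd (h ▸ hy₂ : gaux γ p c = 0) (ne_of_lt hgc)
      · exact h
    · rcases eq_or_lt_of_le hy₂m.2 with h | h
      · exact absurd (h ▸ hy₂) (ne_of_gt hgb)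
      · exact h
  have hy₁0 : 0 < y₁ := lt_trans hp0' hy₁mem.1
  have hy₁c : y₁ < c := hy₁mem.2
  have hy₂c : c < y₂ := hy₂mem.1
  have hy₂1 : y₂ < 1 := lt_trans hy₂mem.2 hbmem.2
  have hy₁1 : y₁ < 1 := lt_trans hy₁c hc1
  -- sign of g
  have hsign1 : ∀ y ∈ Set.Ioo (0:ℝ) y₁, 0 < gaux γ p y := by
    intro y hy
    have := hanti ⟨hy.1, le_of_lt (lt_trans hy.2 hy₁c)⟩ ⟨hy₁0, le_of_lt hy₁c⟩ hy.2
    rw [hy₁] at this; exact this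
  have hsign2 : ∀ y ∈ Set.Ioo y₁ y₂, gaux γ p y < 0 := by
    intro y hy
    rcases le_or_gt y c with h | h
    · have := hanti ⟨hy₁0, le_of_lt hy₁c⟩ ⟨lt_trans hy₁0 hy.1, h⟩ hy.1
      rw [hy₁] at this; exact this
    · have := hmono ⟨le_of_lt h, lt_trans hy.2 hy₂1⟩ ⟨le_of_lt hy₂c, hy₂1⟩ hy.2
      rw [hy₂] at this; exact this
  have hsign3 : ∀ y ∈ Set.Ioo y₂ (1:ℝ), 0 < gaux γ p y := by
    intro y hy
    have := hmono ⟨le_of_lt hy₂c, hy₂1⟩ ⟨le_of_lt (lt_trans hy₂c hy.1), hy.2⟩ hy.1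
    rw [hy₂] at this; exact this
  -- the inflection points
  refine ⟨y₁ ^ γ, y₂ ^ γ, ?_, ?_, ?_, ?_⟩
  · exact Real.rpow_lt_rpow hp0'.le hy₁mem.1 hγ0
  · exact Real.rpow_lt_rpow hy₁0.le (lt_trans hy₁c hy₂c) hγ0
  · exact Real.rpow_lt_one (le_of_lt (lt_trans hy₁0 (lt_trans hy₁c hy₂c))) hy₂1 hγ0
  -- transfer: x ∈ (0,1) gives the second derivative formula
  have hx1γ : ∀ x : ℝ, x ∈ Set.Ioo (0:ℝ) 1 →
      iteratedDeriv 2 (fun x => hbin p (x ^ (1 / γ))) x = Gaux γ p x := by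
    intro x hx
    have h2 : iteratedDeriv 2 (fun x => hbin p (x ^ (1 / γ))) x =
        deriv (deriv (fun x => hbin p (x ^ (1 / γ)))) x := by
      rw [iteratedDeriv_succ, iteratedDeriv_succ, iteratedDeriv_zero]
    rw [h2]
    have hev : deriv (fun x => hbin p (x ^ (1 / γ))) =ᶠ[nhds x] Faux γ p := by
      filter_upwards [Ioo_mem_nhds hx.1 hx.2] with z hz
      exact (hasDerivAt_hbin_comp γ p hγ ⟨hp0', hp1⟩ hz).deriv
    rw [hev.deriv_eq]
    exact (hasDerivAt_Faux γ p hγ ⟨hp0', hp1⟩ hx).deriv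
  -- x-interval to y-interval correspondence
  have hyx : ∀ x : ℝ, 0 < x → x ^ (1/γ) ∈ Set.Ioo (0:ℝ) 1 → True := fun _ _ _ => trivial
  have hsub1 : Set.Ioo (0:ℝ) (y₁ ^ γ) ⊆ Set.Ioo (0:ℝ) 1 := by
    intro x hx
    exact ⟨hx.1, lt_trans hx.2 (Real.rpow_lt_one hy₁0.le hy₁1 hγ0)⟩
  have hsub2 : Set.Ioo (y₁ ^ γ) (y₂ ^ γ) ⊆ Set.Ioo (0:ℝ) 1 := by
    intro x hx
    exact ⟨lt_trans (rpow_pos_of_pos hy₁0 γ) hx.1,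
      lt_trans hx.2 (Real.rpow_lt_one (lt_trans hy₁0 (lt_trans hy₁c hy₂c)).le hy₂1 hγ0)⟩
  have hsub3 : Set.Ioo (y₂ ^ γ) (1:ℝ) ⊆ Set.Ioo (0:ℝ) 1 := by
    intro x hx
    exact ⟨lt_trans (rpow_pos_of_pos (lt_trans hy₁0 (lt_trans hy₁c hy₂c)) γ) hx.1, hx.2⟩
  have hinvγ : (0:ℝ) < 1/γ := by positivity
  have hyγ : ∀ z : ℝ, 0 < z → (z ^ γ) ^ (1/γ) = z := by
    intro z hz
    rw [← Real.rpow_mul hz.le, mul_one_div, div_self hγ0.ne', Real.rpow_one]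
  have hmap : ∀ z x : ℝ, 0 < z → 0 < x → x < z ^ γ → x ^ (1/γ) < z := by
    intro z x hz hx hxz
    have := Real.rpow_lt_rpow hx.le hxz hinvγ
    rwa [hyγ z hz] at this
  have hmap' : ∀ z x : ℝ, 0 < z → z ^ γ < x → z < x ^ (1/γ) := by
    intro z x hz hxz
    have hx : 0 < x := lt_trans (rpow_pos_of_pos hz γ) hxz
    have := Real.rpow_lt_rpow (rpow_pos_of_pos hz γ).le hxz hinvγ
    rwa [hyγ z hz] at this
  have hGfact : ∀ x : ℝ, x ∈ Set.Ioo (0:ℝ) 1 →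
      (0 < gaux γ p (x ^ (1/γ)) → 0 < Gaux γ p x) ∧
      (gaux γ p (x ^ (1/γ)) < 0 → Gaux γ p x < 0) := by
    intro x hx
    have hpos : 0 < x ^ (1/γ - 2) / γ ^ 2 := by
      have := rpow_pos_of_pos hx.1 (1/γ - 2)
      positivity
    constructor
    · intro h; exact mul_pos hpos h
    · intro h; exact mul_neg_of_pos_of_neg hpos h
  have key1 : ∀ x ∈ Set.Ioo (0:ℝ) (y₁ ^ γ),
      0 < iteratedDeriv 2 (fun x => hbin p (x ^ (1 / γ))) x := by
    intro x hx
    have hx' := hsub1 hx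
    rw [hx1γ x hx']
    apply (hGfact x hx').1
    apply hsign1
    exact ⟨rpow_pos_of_pos hx.1 _, hmap y₁ x hy₁0 hx.1 hx.2⟩
  have key2 : ∀ x ∈ Set.Ioo (y₁ ^ γ) (y₂ ^ γ),
      iteratedDeriv 2 (fun x => hbin p (x ^ (1 / γ))) x < 0 := by
    intro x hx
    have hx' := hsub2 hx
    rw [hx1γ x hx']
    apply (hGfact x hx').2
    apply hsign2
    exact ⟨hmap' y₁ x hy₁0 hx.1,
      hmap y₂ x (lt_trans hy₁0 (lt_trans hy₁c hy₂c)) hx'.1 hx.2⟩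
  have key3 : ∀ x ∈ Set.Ioo (y₂ ^ γ) (1:ℝ),
      0 < iteratedDeriv 2 (fun x => hbin p (x ^ (1 / γ))) x := by
    intro x hx
    have hx' := hsub3 hx
    rw [hx1γ x hx']
    apply (hGfact x hx').1
    apply hsign3
    refine ⟨hmap' y₂ x (lt_trans hy₁0 (lt_trans hy₁c hy₂c)) hx.1, ?_⟩
    exact rpow_lt_one hx'.1.le hx'.2 hinvγ
  have hcontf : ContinuousOn (fun x => hbin p (x ^ (1 / γ))) (Set.Ioo (0:ℝ) 1) := by
    intro x hx
    exact (hasDerivAt_hbin_comp γ p hγ ⟨hp0', hp1⟩ hx).continuousAt.continuousWithinAt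
  have hiter : ∀ x : ℝ, deriv^[2] (fun x => hbin p (x ^ (1 / γ))) x =
      iteratedDeriv 2 (fun x => hbin p (x ^ (1 / γ))) x := by
    intro x
    rw [iteratedDeriv_eq_iterate]
  have cv1 : ConvexOn ℝ (Set.Ioo (0:ℝ) (y₁ ^ γ)) (fun x => hbin p (x ^ (1 / γ))) := by
    apply StrictConvexOn.convexOn
    apply strictConvexOn_of_deriv2_pos (convex_Ioo _ _) (hcontf.mono hsub1)
    intro x hx
    rw [interior_Ioo] at hx
    rw [hiter]
    exact key1 x hx
  have cc : ConcaveOn ℝ (Set.Ioo (y₁ ^ γ) (y₂ ^ γ)) (fun x => hbin p (x ^ (1 / γ))) := by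
    apply StrictConcaveOn.concaveOn
    apply strictConcaveOn_of_deriv2_neg (convex_Ioo _ _) (hcontf.mono hsub2)
    intro x hx
    rw [interior_Ioo] at hx
    rw [hiter]
    exact key2 x hx
  have cv2 : ConvexOn ℝ (Set.Ioo (y₂ ^ γ) (1:ℝ)) (fun x => hbin p (x ^ (1 / γ))) := by
    apply StrictConvexOn.convexOn
    apply strictConvexOn_of_deriv2_pos (convex_Ioo _ _) (hcontf.mono hsub3)
    intro x hx
    rw [interior_Ioo] at hx
    rw [hiter]
    exact key3 x hx
  exact ⟨key1, key2, key3, cv1, cc, cv2⟩
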